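/- Let x, r, w, p be integers with gcd(x,r)=1, p an odd prime, x(x^2+6r^2) = 5^(p-1) * w^p, 5 ∣ x, and x odd and not divisible by 3. Then there exist integers w1, w2 with x = 5^(p-1) * w1^p and x^2 + 6r^2 = w2^p. -/

import Mathlib

theorem case_one_descent (x r w : ℤ) (p : ℕ) (hp : p.Prime) (hodd : Odd p)
    (hcop : Int.gcd x r = 1)
    (h : x * (x^2 + 6*r^2) = 5^(p-1) * w^p)
    (h5 : (5 : ℤ) ∣ x) (hx2 : Odd x) (hx3 : ¬ (3 : ℤ) ∣ x) :
    ∃ w1 w2 : ℤ, x = 5^(p-1) * w1^p ∧ x^2 + 6*r^2 = w2^p := by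
  have hp5 : Prime (5 : ℤ) := by norm_num
  have hp2 : Prime (2 : ℤ) := by norm_num
  have hp3 : Prime (3 : ℤ) := by norm_num
  -- 5 ∤ r
  have h5r : ¬ (5 : ℤ) ∣ r := by
    intro hr
    have : (5 : ℤ) ∣ Int.gcd x r := by rw [Int.coe_gcd]; exact dvd_gcd h5 hr
    rw [hcop] at this
    norm_num at this
  -- 5 ∤ x^2 + 6r^2
  have h5A : ¬ (5 : ℤ) ∣ (x^2 + 6*r^2) := by
    intro hA
    have hx2' : (5 : ℤ) ∣ x^2 := dvd_pow h5 two_ne_zero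
    have h6 : (5 : ℤ) ∣ 6*r^2 := (dvd_add_right hx2').mp hA
    have : (5 : ℤ) ∣ r^2 := by
      rcases hp5.dvd_mul.mp h6 with h' | h'
      · norm_num at h'
      · exact h'
    exact h5r (hp5.dvd_of_dvd_pow this)
  -- 2 ∤ x
  have h2x : ¬ (2 : ℤ) ∣ x := by
    rw [Int.two_dvd_ne_zero]
    exact Int.odd_iff.mp hx2
  -- IsCoprime x (x^2 + 6r^2)
  have hxr : IsCoprime x r := Int.isCoprime_iff_gcd_eq_one.mpr hcop
  have hx6 : IsCoprime x 6 := by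
    have c2 : IsCoprime x 2 := (hp2.coprime_iff_not_dvd.mpr h2x).symm
    have c3 : IsCoprime x 3 := (hp3.coprime_iff_not_dvd.mpr hx3).symm
    have := c2.mul_right c3
    norm_num at this
    exact this
  have hcopA : IsCoprime x (x^2 + 6*r^2) := by
    have : IsCoprime x (6 * r^2) := hx6.mul_right (hxr.pow_right)
    have h2 := this.add_mul_left_right x
    have : x^2 + 6*r^2 = 6 * r^2 + x * x := by ring
    rwa [this]
  -- 5^(p-1) ∣ x
  have hc5A : IsCoprime ((5:ℤ)^(p-1)) (x^2 + 6*r^2) :=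
    (hp5.coprime_iff_not_dvd.mpr h5A).pow_left
  have hdvd : (5:ℤ)^(p-1) ∣ x := by
    have : (5:ℤ)^(p-1) ∣ x * (x^2 + 6*r^2) := h ▸ Dvd.intro _ rfl
    exact hc5A.dvd_of_dvd_mul_right this
  obtain ⟨x', hx'⟩ := hdvd
  have h5ne : ((5:ℤ)^(p-1)) ≠ 0 := by positivity
  have hmul : x' * (x^2 + 6*r^2) = w^p := by
    have : (5:ℤ)^(p-1) * (x' * (x^2 + 6*r^2)) = (5:ℤ)^(p-1) * w^p := by
      rw [← h, hx']; ring
    exact mul_left_cancel₀ h5ne this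
  have hcop' : IsCoprime x' (x^2 + 6*r^2) :=
    hcopA.of_isCoprime_of_dvd_left ⟨(5:ℤ)^(p-1), by rw [hx']; ring⟩
  obtain ⟨⟨w1, hw1⟩, ⟨w2, hw2⟩⟩ := Int.eq_pow_of_mul_eq_pow_odd hcop' hodd hmul
  exact ⟨w1, w2, by rw [hx', hw1], hw2⟩
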